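/- Let F be a field of characteristic 2 and L/F an extension of degree 4 with a² ∈ F for all a ∈ L. Let M be a 2-dimensional F-subspace of L and i ∈ L \ F. Then M is Clifford parallel to F[i] = F ⊕ Fi (i.e., M = F[i]·b for some b ∈ L \ {0}) if and only if there exists b ∈ L \ {0} such that the element 1⊗ib + i⊗b lies in the L-span of {1 ⊗ m : m ∈ M} inside L ⊗_F L. -/

import Mathlib

open TensorProduct

/-- If `{1, i}` is "independent" in the sense that `i` is not in the image of `F`,
then `1 ⊗ x + i ⊗ y = 0` forces `x = y = 0`. -/
lemma stmt18_aux {F L : Type*} [Field F] [Field L] [Algebra F L]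
    (i : L) (hi : i ∉ Set.range (algebraMap F L)) {V : Type*} [AddCommGroup V] [Module F V]
    {x y : V} (h : (1 : L) ⊗ₜ[F] x + i ⊗ₜ[F] y = 0) : x = 0 ∧ y = 0 := by
  classical
  have h1i : (1 : L) ≠ i := by
    rintro h1
    exact hi ⟨1, by simpa using h1⟩
  -- {1, i} is linearly independent over F
  have hpair : LinearIndependent F ![(1 : L), i] := by
    rw [LinearIndependent.pair_iff]
    intro s t hst
    have hst' : (algebraMap F L s + algebraMap F L t * i) = 0 := by
      simpa [Algebra.smul_def] using hst
    have ht : t = 0 := by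
      by_contra ht
      apply hi
      refine ⟨-s / t, ?_⟩
      have htL : algebraMap F L t ≠ 0 := fun h0 =>
        ht ((algebraMap F L).injective (by simpa using h0))
      rw [map_div₀, map_neg, div_eq_iff htL]
      linear_combination -hst'
    have hs : algebraMap F L s = 0 := by simpa [ht] using hst'
    exact ⟨(algebraMap F L).injective (by simpa using hs), ht⟩
  have hset : LinearIndepOn F id ({1, i} : Set L) := by
    have := hpair.linearIndepOn_id
    rwa [show Set.range ![(1 : L), i] = {1, i} by
      simp [Matrix.range_cons, Matrix.range_empty, Set.pair_comm]] at this
  -- extend to a basis of L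
  let B := Module.Basis.extend hset
  have h1mem : (1 : L) ∈ hset.extend (Set.subset_univ _) :=
    hset.subset_extend _ (Set.mem_insert _ _)
  have himem : i ∈ hset.extend (Set.subset_univ _) :=
    hset.subset_extend _ (Set.mem_insert_of_mem _ rfl)
  -- coordinate functionals
  have key : ∀ (j : hset.extend (Set.subset_univ _)),
      (B.coord j) 1 • x + (B.coord j) i • y = 0 := by
    intro j
    have := congrArg (((TensorProduct.lid F V).toLinearMap.comp
      (LinearMap.rTensor V (B.coord j)))) h
    simpa using this
  have hco : ∀ (j k : hset.extend (Set.subset_univ _)), (B.coord j) (B k) = if k = j then 1 else 0 := by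
    intro j k
    simp [Module.Basis.coord_apply, Module.Basis.repr_self, Finsupp.single_apply]
  constructor
  · have := key ⟨1, h1mem⟩
    have e1 : (B.coord ⟨1, h1mem⟩) 1 = 1 := by
      have := hco ⟨1, h1mem⟩ ⟨1, h1mem⟩
      rwa [Module.Basis.extend_apply_self, if_pos rfl] at this
    have e2 : (B.coord ⟨1, h1mem⟩) i = 0 := by
      have := hco ⟨1, h1mem⟩ ⟨i, himem⟩
      rwa [Module.Basis.extend_apply_self, if_neg (by simp [Subtype.ext_iff]; exact h1i.symm)] at this
    simpa [e1, e2] using key ⟨1, h1mem⟩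
  · have e1 : (B.coord ⟨i, himem⟩) 1 = 0 := by
      have := hco ⟨i, himem⟩ ⟨1, h1mem⟩
      rwa [Module.Basis.extend_apply_self, if_neg (by simp [Subtype.ext_iff]; exact h1i)] at this
    have e2 : (B.coord ⟨i, himem⟩) i = 1 := by
      have := hco ⟨i, himem⟩ ⟨i, himem⟩
      rwa [Module.Basis.extend_apply_self, if_pos rfl] at this
    simpa [e1, e2] using key ⟨i, himem⟩

theorem stmt18 (F L : Type*) [Field F] [Field L] [Algebra F L] [CharP F 2]
    (hdim : Module.finrank F L = 4)
    (hsq : ∀ a : L, ∃ f : F, algebraMap F L f = a ^ 2) (i : L) (hi : i ∉ Set.range (algebraMap F L))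
    (M : Submodule F L) (hM : Module.finrank F M = 2) :
    (∃ b : L, b ≠ 0 ∧
        M = (Submodule.span F {(1 : L), i}).map (LinearMap.mulRight F b)) ↔
    (∃ b : L, b ≠ 0 ∧
        1 ⊗ₜ[F] (i * b) + i ⊗ₜ[F] b ∈
          Submodule.span L {z : L ⊗[F] L | ∃ m ∈ M, z = (1 : L) ⊗ₜ[F] m}) := by
  constructor
  · rintro ⟨b, hb, rfl⟩
    refine ⟨b, hb, ?_⟩
    have hbM : b ∈ (Submodule.span F {(1 : L), i}).map (LinearMap.mulRight F b) :=
      Submodule.mem_map.2 ⟨1, Submodule.subset_span (Set.mem_insert _ _), one_mul b⟩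
    have hibM : i * b ∈ (Submodule.span F {(1 : L), i}).map (LinearMap.mulRight F b) :=
      Submodule.mem_map.2 ⟨i, Submodule.subset_span (Set.mem_insert_of_mem _ rfl), rfl⟩
    have h1 : (1 : L) ⊗ₜ[F] (i * b) ∈ Submodule.span L
        {z : L ⊗[F] L | ∃ m ∈ (Submodule.span F {(1 : L), i}).map (LinearMap.mulRight F b),
          z = (1 : L) ⊗ₜ[F] m} := Submodule.subset_span ⟨i * b, hibM, rfl⟩
    have h2 : (1 : L) ⊗ₜ[F] b ∈ Submodule.span L
        {z : L ⊗[F] L | ∃ m ∈ (Submodule.span F {(1 : L), i}).map (LinearMap.mulRight F b),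
          z = (1 : L) ⊗ₜ[F] m} := Submodule.subset_span ⟨b, hbM, rfl⟩
    have hsm : i ⊗ₜ[F] b = i • ((1 : L) ⊗ₜ[F] b) := by
      rw [TensorProduct.smul_tmul', smul_eq_mul, mul_one]
    exact Submodule.add_mem _ h1 (hsm ▸ Submodule.smul_mem _ i h2)
  · rintro ⟨b, hb, hmem⟩
    -- the span is contained in the kernel of base-changed quotient map
    have hker : Submodule.span L {z : L ⊗[F] L | ∃ m ∈ M, z = (1 : L) ⊗ₜ[F] m} ≤
        LinearMap.ker ((M.mkQ).baseChange L) := by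
      rw [Submodule.span_le]
      rintro z ⟨m, hm, rfl⟩
      simp [LinearMap.mem_ker, LinearMap.baseChange_tmul,
        (Submodule.Quotient.mk_eq_zero M).2 hm]
    have h0 : (1 : L) ⊗ₜ[F] (M.mkQ (i * b)) + i ⊗ₜ[F] (M.mkQ b) = 0 := by
      have := hker hmem
      rw [LinearMap.mem_ker, map_add, LinearMap.baseChange_tmul, LinearMap.baseChange_tmul] at this
      exact this
    obtain ⟨hq1, hq2⟩ := stmt18_aux i hi h0
    have hibM : i * b ∈ M := by rwa [Submodule.mkQ_apply, Submodule.Quotient.mk_eq_zero] at hq1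
    have hbM : b ∈ M := by rwa [Submodule.mkQ_apply, Submodule.Quotient.mk_eq_zero] at hq2
    refine ⟨b, hb, ?_⟩
    -- the candidate submodule
    have hNspan : (Submodule.span F {(1 : L), i}).map (LinearMap.mulRight F b) =
        Submodule.span F {b, i * b} := by
      rw [Submodule.map_span]
      congr 1
      rw [Set.image_pair]
      simp [LinearMap.mulRight_apply]
    have hle : (Submodule.span F {(1 : L), i}).map (LinearMap.mulRight F b) ≤ M := by
      rw [hNspan, Submodule.span_le]
      rintro x hx
      rcases hx with rfl | rfl
      · exact hbM
      · exact hibM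
    -- linear independence of b, i*b
    have hpair : LinearIndependent F ![b, i * b] := by
      rw [LinearIndependent.pair_iff]
      intro s t hst
      have hst' : (algebraMap F L s + algebraMap F L t * i) * b = 0 := by
        have : s • b + t • (i * b) = (algebraMap F L s + algebraMap F L t * i) * b := by
          simp [Algebra.smul_def]; ring
        rw [← this]; exact hst
      have hsum : algebraMap F L s + algebraMap F L t * i = 0 :=
        (mul_eq_zero.mp hst').resolve_right hb
      have ht : t = 0 := by
        by_contra ht
        apply hi
        refine ⟨-s / t, ?_⟩
        have htL : algebraMap F L t ≠ 0 := fun h0 =>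
          ht ((algebraMap F L).injective (by simpa using h0))
        rw [map_div₀, map_neg, div_eq_iff htL]
        linear_combination -hsum
      have hs : algebraMap F L s = 0 := by simpa [ht] using hsum
      exact ⟨(algebraMap F L).injective (by simpa using hs), ht⟩
    have hrank : Module.finrank F (Submodule.span F ({b, i * b} : Set L)) = 2 := by
      have := finrank_span_eq_card hpair
      rwa [show Set.range ![b, i * b] = {b, i * b} by
        simp [Matrix.range_cons, Matrix.range_empty, Set.pair_comm], Fintype.card_fin] at this
    haveI : FiniteDimensional F M := Module.finite_of_finrank_eq_succ hM
    refine (Submodule.eq_of_le_of_finrank_le hle ?_).symm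
    rw [hM, hNspan, hrank]
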